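/- The set of satisfied indices S is finite and satisfies #S ≤ 10^4 · ∬_{{(s,t) ∈ [0,1]×[0,1] : |g(s)−g(t)| > δ}} ds dt / |s−t|². -/
import Mathlib

open MeasureTheory Set
open scoped ENNReal

/-- One-dimensional Lebesgue measure of a set, as a real number. -/
noncomputable def len (A : Set ℝ) : ℝ := (volume A).toReal

/-- The discretized level set `E_k = {s ∈ [0,1] | kδ ≤ g(s) ≤ (k+1)δ}`. -/
def lev (g : ℝ → ℝ) (δ : ℝ) (k : ℤ) : Set ℝ :=
  {s ∈ Icc (0:ℝ) 1 | (k : ℝ) * δ ≤ g s ∧ g s ≤ ((k : ℝ) + 1) * δ}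

/-- The neighbors `N_k = E_{k-1} ∪ E_k ∪ E_{k+1}`. -/
def nbr (g : ℝ → ℝ) (δ : ℝ) (k : ℤ) : Set ℝ :=
  lev g δ (k - 1) ∪ lev g δ k ∪ lev g δ (k + 1)

/-- The set of satisfied indices `𝒮`. -/
def sat (g : ℝ → ℝ) (δ : ℝ) : Set ℕ :=
  {k | ∃ a b : ℝ, 0 ≤ a ∧ a < b ∧ b ≤ 1 ∧
    len (lev g δ k ∩ Ioo a b) > 0.01 * (b - a) ∧
    len ((Icc (0:ℝ) 1 \ nbr g δ k) ∩ Ioo a b) > 0.01 * (b - a)}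

lemma measurableSet_lev {g : ℝ → ℝ} {δ : ℝ} (hg : ContinuousOn g (Icc (0:ℝ) 1)) (k : ℤ) :
    MeasurableSet (lev g δ k) := by
  have h : lev g δ k = Icc (0:ℝ) 1 ∩ g ⁻¹' (Icc ((k:ℝ)*δ) (((k:ℝ)+1)*δ)) := by
    ext s; simp [lev, Set.mem_Icc]
  rw [h]
  exact (hg.preimage_isClosed_of_isClosed isClosed_Icc isClosed_Icc).measurableSet

lemma measurableSet_nbr {g : ℝ → ℝ} {δ : ℝ} (hg : ContinuousOn g (Icc (0:ℝ) 1)) (k : ℤ) :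
    MeasurableSet (nbr g δ k) :=
  ((measurableSet_lev hg _).union (measurableSet_lev hg _)).union (measurableSet_lev hg _)

lemma lev_nonempty_of_sat {g : ℝ → ℝ} {δ : ℝ} {k : ℕ} {a b : ℝ} (hab : a < b)
    (h1 : len (lev g δ k ∩ Ioo a b) > 0.01 * (b - a)) :
    (lev g δ (k:ℤ) ∩ Ioo a b).Nonempty := by
  rcases (lev g δ (k:ℤ) ∩ Ioo a b).eq_empty_or_nonempty with h | h
  · exfalso
    rw [h] at h1
    simp only [len, measure_empty, ENNReal.toReal_zero] at h1
    nlinarith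
  · exact h

set_option maxHeartbeats 1000000 in
theorem stmt9 (δ : ℝ) (hδ : 0 < δ) (M : ℕ) (hM : 100 < M) (g : ℝ → ℝ)
    (hg : ContinuousOn g (Icc (0:ℝ) 1)) (hg0 : g 0 = 0) (hg1 : g 1 = (M : ℝ) * δ)
    (hlev : ∀ k : ℕ, {s ∈ Icc (0:ℝ) 1 | g s = (k : ℝ) * δ}.Finite) :
    (sat g δ).Finite ∧
    ((sat g δ).ncard : ENNReal) ≤ 10 ^ 4 *
      ∫⁻ p in {p : ℝ × ℝ | p.1 ∈ Icc (0:ℝ) 1 ∧ p.2 ∈ Icc (0:ℝ) 1 ∧ δ < |g p.1 - g p.2|},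
        ENNReal.ofReal (1 / |p.1 - p.2| ^ 2) := by
  classical
  obtain ⟨C, hC⟩ := isCompact_Icc.exists_bound_of_continuousOn hg
  -- Finiteness of `sat`
  have hfin : (sat g δ).Finite := by
    apply Set.Finite.subset (Set.finite_Iic ⌈C / δ⌉₊)
    rintro k ⟨a, b, ha, hab, hb1, h1, h2⟩
    obtain ⟨s, hs, _⟩ := lev_nonempty_of_sat hab h1
    obtain ⟨hsI, hks, _⟩ := hs
    have hgC : g s ≤ C := by
      have := hC s hsI
      rw [Real.norm_eq_abs] at this
      exact (le_abs_self _).trans this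
    have hkr : (k:ℝ) ≤ C / δ := by
      rw [le_div_iff₀ hδ]
      push_cast at hks
      linarith
    have : (k:ℝ) ≤ (⌈C / δ⌉₊ : ℝ) := hkr.trans (Nat.le_ceil _)
    exact_mod_cast Set.mem_Iic.mpr (by exact_mod_cast this)
  refine ⟨hfin, ?_⟩
  set f : ℝ × ℝ → ℝ≥0∞ := fun p => ENNReal.ofReal (1 / |p.1 - p.2| ^ 2) with hf_def
  have hf : Measurable f := by
    apply Measurable.ennreal_ofReal
    exact Measurable.div measurable_const ((measurable_fst.sub measurable_snd).abs.pow_const 2)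
  set R : Set (ℝ × ℝ) :=
    {p : ℝ × ℝ | p.1 ∈ Icc (0:ℝ) 1 ∧ p.2 ∈ Icc (0:ℝ) 1 ∧ δ < |g p.1 - g p.2|} with hR_def
  set F : Finset ℕ := hfin.toFinset with hF_def
  -- the null set of level points
  set B : Set ℝ := ⋃ k ∈ F, {s ∈ Icc (0:ℝ) 1 | g s = ((k:ℝ)+1)*δ} with hB_def
  have hBfin : B.Finite := by
    apply Set.Finite.biUnion F.finite_toSet
    intro k _
    have h := hlev (k+1)
    rw [Nat.cast_add, Nat.cast_one] at h
    exact h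
  have hBnull : volume B = 0 := hBfin.measure_zero _
  have hBmeas : MeasurableSet B := hBfin.measurableSet
  -- key per-index construction
  have key : ∀ k ∈ F, ∃ S T : Set ℝ, MeasurableSet S ∧ MeasurableSet T ∧
      S ⊆ lev g δ (k:ℤ) \ B ∧ (S ×ˢ T ⊆ R) ∧
      ENNReal.ofReal (1/10^4) ≤ ∫⁻ p in S ×ˢ T, f p := by
    intro k hk
    obtain ⟨a, b, ha0, hab, hb1, h1, h2⟩ := hfin.mem_toFinset.mp hk
    refine ⟨(lev g δ (k:ℤ) ∩ Ioo a b) \ B, (Icc (0:ℝ) 1 \ nbr g δ (k:ℤ)) ∩ Ioo a b,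
      (((measurableSet_lev hg _).inter measurableSet_Ioo).diff hBmeas),
      ((measurableSet_Icc.diff (measurableSet_nbr hg _)).inter measurableSet_Ioo), ?_, ?_, ?_⟩
    · intro s hs; exact ⟨hs.1.1, hs.2⟩
    · -- product contained in the region
      rintro ⟨s, t⟩ ⟨hs, ht⟩
      obtain ⟨⟨hsL, _⟩, _⟩ := hs
      obtain ⟨⟨htI, htN⟩, _⟩ := ht
      obtain ⟨hsI, hks1, hks2⟩ := hsL
      refine ⟨hsI, htI, ?_⟩
      have h3 : g t < ((k:ℝ)-1)*δ ∨ ((k:ℝ)+2)*δ < g t := by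
        by_contra hcon
        push_neg at hcon
        obtain ⟨hc1, hc2⟩ := hcon
        apply htN
        rcases le_or_gt (g t) ((k:ℝ)*δ) with h | h
        · exact Or.inl (Or.inl ⟨htI, by push_cast; linarith, by push_cast; linarith⟩)
        · rcases le_or_gt (g t) (((k:ℝ)+1)*δ) with h' | h'
          · exact Or.inl (Or.inr ⟨htI, by push_cast; linarith, by push_cast; linarith⟩)
          · exact Or.inr ⟨htI, by push_cast; linarith, by push_cast; linarith⟩
      rcases h3 with h | h
      · have : δ < g s - g t := by push_cast at hks1; nlinarith
        exact this.trans_le (le_abs_self _)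
      · have : δ < -(g s - g t) := by push_cast at hks2; nlinarith
        exact this.trans_le (neg_le_abs _)
    · -- the integral lower bound
      -- abbreviations
      set S : Set ℝ := (lev g δ (k:ℤ) ∩ Ioo a b) \ B with hS_def
      set T : Set ℝ := (Icc (0:ℝ) 1 \ nbr g δ (k:ℤ)) ∩ Ioo a b with hT_def
      have hRsub : S ×ˢ T ⊆ R := by
        rintro ⟨s, t⟩ ⟨hs, ht⟩
        obtain ⟨⟨hsL, _⟩, _⟩ := hs
        obtain ⟨⟨htI, htN⟩, _⟩ := ht
        obtain ⟨hsI, hks1, hks2⟩ := hsL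
        refine ⟨hsI, htI, ?_⟩
        have h3 : g t < ((k:ℝ)-1)*δ ∨ ((k:ℝ)+2)*δ < g t := by
          by_contra hcon
          push_neg at hcon
          obtain ⟨hc1, hc2⟩ := hcon
          apply htN
          rcases le_or_gt (g t) ((k:ℝ)*δ) with h | h
          · exact Or.inl (Or.inl ⟨htI, by push_cast; linarith, by push_cast; linarith⟩)
          · rcases le_or_gt (g t) (((k:ℝ)+1)*δ) with h' | h'
            · exact Or.inl (Or.inr ⟨htI, by push_cast; linarith, by push_cast; linarith⟩)
            · exact Or.inr ⟨htI, by push_cast; linarith, by push_cast; linarith⟩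
        rcases h3 with h | h
        · have : δ < g s - g t := by push_cast at hks1; nlinarith
          exact this.trans_le (le_abs_self _)
        · have : δ < -(g s - g t) := by push_cast at hks2; nlinarith
          exact this.trans_le (neg_le_abs _)
      set c : ℝ≥0∞ := ENNReal.ofReal (1/(b-a)^2) with hc_def
      have hbound : ∀ p ∈ S ×ˢ T, c ≤ f p := by
        rintro ⟨s, t⟩ hp
        obtain ⟨hs, ht⟩ := hp
        have hR : (s, t) ∈ R := hRsub ⟨hs, ht⟩
        have hst : s ≠ t := by
          intro h
          have h22 : δ < |g s - g t| := hR.2.2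
          rw [h, sub_self, abs_zero] at h22
          linarith
        have hsIoo : s ∈ Ioo a b := hs.1.2
        have htIoo : t ∈ Ioo a b := ht.2
        have h0 : 0 < |s - t| := abs_pos.mpr (sub_ne_zero.mpr hst)
        have hlt : |s - t| < b - a := by
          rw [abs_sub_lt_iff]
          constructor <;> [linarith [hsIoo.2, htIoo.1]; linarith [hsIoo.1, htIoo.2]]
        apply ENNReal.ofReal_le_ofReal
        apply one_div_le_one_div_of_le (by positivity)
        nlinarith
      -- volume bounds
      have hvolIoo : volume (Ioo a b) = ENNReal.ofReal (b - a) := Real.volume_Ioo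
      have hSvol : ENNReal.ofReal (0.01*(b-a)) ≤ volume S := by
        have heq : volume S = volume (lev g δ (k:ℤ) ∩ Ioo a b) := measure_diff_null hBnull
        have hle : volume (lev g δ (k:ℤ) ∩ Ioo a b) ≤ ENNReal.ofReal (b - a) := by
          rw [← hvolIoo]; exact measure_mono inter_subset_right
        have hne : volume (lev g δ (k:ℤ) ∩ Ioo a b) ≠ ⊤ :=
          (hle.trans_lt ENNReal.ofReal_lt_top).ne
        rw [heq, ← ENNReal.ofReal_toReal hne]
        exact ENNReal.ofReal_le_ofReal h1.le
      have hTvol : ENNReal.ofReal (0.01*(b-a)) ≤ volume T := by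
        have hle : volume T ≤ ENNReal.ofReal (b - a) := by
          rw [← hvolIoo]; exact measure_mono inter_subset_right
        have hne : volume T ≠ ⊤ := (hle.trans_lt ENNReal.ofReal_lt_top).ne
        rw [← ENNReal.ofReal_toReal hne]
        exact ENNReal.ofReal_le_ofReal h2.le
      have hprod : volume (S ×ˢ T) = volume S * volume T := by
        rw [Measure.volume_eq_prod, Measure.prod_prod]
      calc ENNReal.ofReal (1/10^4)
          = c * (ENNReal.ofReal (0.01*(b-a)) * ENNReal.ofReal (0.01*(b-a))) := by
            rw [hc_def, ← ENNReal.ofReal_mul (by norm_num; linarith),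
              ← ENNReal.ofReal_mul (by positivity)]
            congr 1
            have h : b - a ≠ 0 := by linarith
            field_simp
            ring
        _ ≤ c * (volume S * volume T) :=
            mul_le_mul_right (mul_le_mul' hSvol hTvol) c
        _ = c * volume (S ×ˢ T) := by rw [hprod]
        _ = ∫⁻ _ in S ×ˢ T, c := (setLIntegral_const _ _).symm
        _ ≤ ∫⁻ p in S ×ˢ T, f p := setLIntegral_mono hf hbound
  choose! S T hSm hTm hSsub hRsub hint using key
  set U : ℕ → Set (ℝ × ℝ) := fun k => S k ×ˢ T k with hU_def
  have hdisj : (↑F : Set ℕ).PairwiseDisjoint U := by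
    intro k hk k' hk' hne
    have main : ∀ j j' : ℕ, j ∈ F → j' ∈ F → j < j' →
        Disjoint (S j ×ˢ T j) (S j' ×ˢ T j') := by
      intro j j' hj hj' hlt
      rw [Set.disjoint_left]
      rintro ⟨s, t⟩ hp hp'
      have hs1 := hSsub j hj hp.1
      have hs2 := hSsub j' hj' hp'.1
      obtain ⟨⟨hsI, hj1, hj2⟩, hsB⟩ := hs1
      obtain ⟨⟨_, hj1', hj2'⟩, _⟩ := hs2
      push_cast at hj1 hj2 hj1' hj2'
      have hj'le : (j':ℝ) ≤ (j:ℝ) + 1 := by nlinarith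
      have hlt' : (j:ℝ) + 1 ≤ (j':ℝ) := by exact_mod_cast hlt
      have hgeq : g s = ((j:ℝ)+1)*δ := by nlinarith
      exact hsB (Set.mem_biUnion hj ⟨hsI, hgeq⟩)
    rcases lt_or_gt_of_ne hne with h | h
    · exact main k k' hk hk' h
    · exact (main k' k hk' hk h).symm
  have hUm : ∀ k ∈ F, MeasurableSet (U k) := fun k hk => (hSm k hk).prod (hTm k hk)
  have hsum : (F.card : ℝ≥0∞) * ENNReal.ofReal (1/10^4) ≤ ∫⁻ p in R, f p := by
    calc (F.card : ℝ≥0∞) * ENNReal.ofReal (1/10^4)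
        = ∑ _k ∈ F, ENNReal.ofReal (1/10^4) := by
          rw [Finset.sum_const, nsmul_eq_mul]
      _ ≤ ∑ k ∈ F, ∫⁻ p in U k, f p := Finset.sum_le_sum (fun k hk => hint k hk)
      _ = ∫⁻ p in ⋃ k ∈ F, U k, f p := (lintegral_biUnion_finset hdisj hUm f).symm
      _ ≤ ∫⁻ p in R, f p := by
          apply lintegral_mono'
          · exact Measure.restrict_mono (Set.iUnion₂_subset (fun k hk => hRsub k hk)) le_rfl
          · exact le_rfl
  have hcard : (sat g δ).ncard = F.card := by
    rw [hF_def, Set.ncard_eq_toFinset_card _ hfin]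
  rw [hcard]
  set I : ℝ≥0∞ := ∫⁻ p in R, f p with hI_def
  have h3 : (10:ℝ≥0∞)^4 * ENNReal.ofReal (1/10^4) = 1 := by
    rw [show ((10:ℝ≥0∞)^4) = ENNReal.ofReal (10^4) by norm_num,
      ← ENNReal.ofReal_mul (by norm_num)]
    norm_num
  calc (F.card : ℝ≥0∞) = 10^4 * ENNReal.ofReal (1/10^4) * F.card := by rw [h3, one_mul]
    _ = 10^4 * ((F.card:ℝ≥0∞) * ENNReal.ofReal (1/10^4)) := by ring
    _ ≤ 10^4 * I := mul_le_mul_right hsum _
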